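/- The distortion error of the two-point set {(1/6, 1/2), (5/6, 1/2)} with respect to P, with the Voronoi boundary being the line x_1 = 1/2, equals 5/36. -/

import Mathlib

open MeasureTheory Set
open scoped ENNReal

/-- The four contractive similarities of ratio 1/3 generating the Sierpiński carpet.
`S 0, S 1, S 2, S 3` correspond to `S_1, S_2, S_3, S_4` in the paper. -/
noncomputable def S (i : Fin 4) (p : ℝ × ℝ) : ℝ × ℝ :=
  (p.1 / 3 + (if i = 1 ∨ i = 3 then (2 : ℝ) / 3 else 0),
   p.2 / 3 + (if i = 2 ∨ i = 3 then (2 : ℝ) / 3 else 0))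

/-- Composition `S_{σ_1} ∘ ⋯ ∘ S_{σ_k}` along a word `σ`. -/
noncomputable def Sw (σ : List (Fin 4)) : ℝ × ℝ → ℝ × ℝ :=
  σ.foldr (fun i g => S i ∘ g) id

/-- The unit square `J = [0,1] × [0,1]`. -/
def K : Set (ℝ × ℝ) := Icc (0, 0) (1, 1)

/-- The basic square `J_σ = S_σ([0,1]²)`. -/
noncomputable def Jw (σ : List (Fin 4)) : Set (ℝ × ℝ) := Sw σ '' K

/-- The self-similarity equation `P = (1/4) ∑_{i=1}^4 P ∘ S_i⁻¹`. -/
def SelfSimilar (P : Measure (ℝ × ℝ)) : Prop :=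
  P = (1 / 4 : ℝ≥0∞) • P.map (S 0) + (1 / 4 : ℝ≥0∞) • P.map (S 1)
    + (1 / 4 : ℝ≥0∞) • P.map (S 2) + (1 / 4 : ℝ≥0∞) • P.map (S 3)

/-- Distortion error of a set `α` of points: `∫ min_{a∈α} ‖x−a‖² dP`
(squared Euclidean distance). -/
noncomputable def distortion (P : Measure (ℝ × ℝ)) (α : Set (ℝ × ℝ)) : ℝ :=
  ∫ x, (⨅ a ∈ α, ((x.1 - a.1) ^ 2 + (x.2 - a.2) ^ 2)) ∂P

/-- The `n`-th quantization error. -/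
noncomputable def Vq (P : Measure (ℝ × ℝ)) (n : ℕ) : ℝ :=
  sInf (distortion P '' {α | α.Finite ∧ α.Nonempty ∧ α.ncard ≤ n})

namespace Q8


lemma contS (i : Fin 4) : Continuous (S i) := by
  unfold S; fun_prop

lemma mem_K {x : ℝ × ℝ} : x ∈ K ↔ 0 ≤ x.1 ∧ x.1 ≤ 1 ∧ 0 ≤ x.2 ∧ x.2 ≤ 1 := by
  simp [K, Prod.le_def, Set.mem_Icc]; tauto

lemma e_cases (i : Fin 4) : (if i = 1 ∨ i = 3 then (2:ℝ)/3 else 0) = 0 ∨ (if i = 1 ∨ i = 3 then (2:ℝ)/3 else 0) = 2/3 := by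
  split <;> simp

lemma f_cases (i : Fin 4) : (if i = 2 ∨ i = 3 then (2:ℝ)/3 else 0) = 0 ∨ (if i = 2 ∨ i = 3 then (2:ℝ)/3 else 0) = 2/3 := by
  split <;> simp

lemma SK (i : Fin 4) {x : ℝ × ℝ} (hx : x ∈ K) : S i x ∈ K := by
  rw [mem_K] at hx ⊢
  obtain ⟨h1, h2, h3, h4⟩ := hx
  unfold S
  rcases e_cases i with h | h <;> rcases f_cases i with h' | h' <;>
    simp only [h, h'] <;>
    exact ⟨by nlinarith, by nlinarith, by nlinarith, by nlinarith⟩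

lemma dist_S (i : Fin 4) (x y : ℝ × ℝ) : dist (S i x) (S i y) = dist x y / 3 := by
  simp only [S, Prod.dist_eq, Real.dist_eq]
  rw [show x.1 / 3 + (if i = 1 ∨ i = 3 then (2:ℝ)/3 else 0) - (y.1 / 3 + (if i = 1 ∨ i = 3 then (2:ℝ)/3 else 0)) = (x.1 - y.1)/3 by ring,
      show x.2 / 3 + (if i = 2 ∨ i = 3 then (2:ℝ)/3 else 0) - (y.2 / 3 + (if i = 2 ∨ i = 3 then (2:ℝ)/3 else 0)) = (x.2 - y.2)/3 by ring,
      abs_div, abs_div]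
  rw [show |(3:ℝ)| = 3 by norm_num]
  rw [max_div_div_right (by norm_num : (0:ℝ) ≤ 3)]


lemma integrable_bdd (μ : Measure (ℝ × ℝ)) [IsFiniteMeasure μ] {g : ℝ × ℝ → ℝ}
    (hg : Continuous g) {C : ℝ} (hb : ∀ x, |g x| ≤ C) : Integrable g μ :=
  (integrable_const C).mono' hg.aestronglyMeasurable (ae_of_all _ fun x => by simpa using hb x)

lemma transfer (P : Measure (ℝ × ℝ)) [IsProbabilityMeasure P] (hP : SelfSimilar P)
    {g : ℝ × ℝ → ℝ} (hg : Continuous g) {C : ℝ} (hb : ∀ x, |g x| ≤ C) :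
    ∫ x, g x ∂P = (1/4) * (∫ x, g (S 0 x) ∂P + ∫ x, g (S 1 x) ∂P
      + ∫ x, g (S 2 x) ∂P + ∫ x, g (S 3 x) ∂P) := by
  have hmap : ∀ i : Fin 4, ∫ x, g x ∂(P.map (S i)) = ∫ x, g (S i x) ∂P := fun i =>
    integral_map (contS i).aemeasurable hg.aestronglyMeasurable
  have hint : ∀ i : Fin 4, Integrable g (P.map (S i)) := fun i => by
    have : IsProbabilityMeasure (P.map (S i)) := Measure.isProbabilityMeasure_map (contS i).aemeasurable
    exact integrable_bdd _ hg hb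
  have hints : ∀ i : Fin 4, Integrable g ((1/4 : ℝ≥0∞) • P.map (S i)) := fun i =>
    (hint i).smul_measure (by norm_num)
  conv_lhs => rw [hP]
  rw [integral_add_measure (((hints 0).add_measure (hints 1)).add_measure (hints 2)) (hints 3),
      integral_add_measure ((hints 0).add_measure (hints 1)) (hints 2),
      integral_add_measure (hints 0) (hints 1),
      integral_smul_measure, integral_smul_measure, integral_smul_measure, integral_smul_measure]
  have : ((1:ℝ≥0∞)/4).toReal = (1:ℝ)/4 := by
    rw [ENNReal.toReal_div]; norm_num
  rw [this]
  simp only [hmap, smul_eq_mul]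
  ring

lemma contract (i : Fin 4) (x : ℝ × ℝ) :
    Metric.infDist (S i x) K ≤ Metric.infDist x K / 3 := by
  by_contra h
  push_neg at h
  have hne : K.Nonempty := ⟨(0,0), by rw [mem_K]; norm_num⟩
  have h3 : Metric.infDist x K < 3 * Metric.infDist (S i x) K := by linarith
  obtain ⟨k, hk, hdk⟩ := (Metric.infDist_lt_iff hne).mp h3
  have h1 : Metric.infDist (S i x) K ≤ dist (S i x) (S i k) :=
    Metric.infDist_le_dist_of_mem (SK i hk)
  rw [dist_S] at h1
  linarith

lemma ae_mem_K (P : Measure (ℝ × ℝ)) [IsProbabilityMeasure P] (hP : SelfSimilar P) :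
    ∀ᵐ x ∂P, x ∈ K := by
  set d : ℝ × ℝ → ℝ := fun x => Metric.infDist x K with hd
  have hne : K.Nonempty := ⟨(0,0), by rw [mem_K]; norm_num⟩
  have hdc : Continuous d := Metric.continuous_infDist_pt K
  have hd0 : ∀ x, 0 ≤ d x := fun x => Metric.infDist_nonneg
  set g : ℕ → ℝ × ℝ → ℝ := fun n x => min ((1/3 : ℝ)^n * d x) 1 with hgdef
  have hgc : ∀ n, Continuous (g n) := fun n => (continuous_const.mul hdc).min continuous_const
  have hgb : ∀ n x, |g n x| ≤ 1 := by
    intro n x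
    rw [abs_le]
    constructor
    · have : (0:ℝ) ≤ g n x := le_min (mul_nonneg (by positivity) (hd0 x)) one_pos.le
      linarith
    · exact min_le_right _ _
  have hgint : ∀ n, Integrable (g n) P := fun n => integrable_bdd P (hgc n) (hgb n)
  have hmono : ∀ n, ∫ x, g n x ∂P ≤ ∫ x, g (n+1) x ∂P := by
    intro n
    rw [transfer P hP (hgc n) (hgb n)]
    have step : ∀ i : Fin 4, ∫ x, g n (S i x) ∂P ≤ ∫ x, g (n+1) x ∂P := by
      intro i
      refine integral_mono (integrable_bdd P ((hgc n).comp (contS i))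
        (fun x => hgb n (S i x))) (hgint (n+1)) ?_
      intro x
      refine min_le_min ?_ le_rfl
      have h1 := contract i x
      have h2 : (0:ℝ) < (1/3 : ℝ)^n := by positivity
      calc (1/3:ℝ)^n * d (S i x) ≤ (1/3:ℝ)^n * (d x / 3) := by
            exact mul_le_mul_of_nonneg_left h1 h2.le
        _ = (1/3:ℝ)^(n+1) * d x := by ring
    have := step 0; have := step 1; have := step 2; have := step 3
    linarith
  have h0n : ∀ n, ∫ x, g 0 x ∂P ≤ ∫ x, g n x ∂P := by
    intro n
    induction n with
    | zero => exact le_rfl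
    | succ m ih => exact ih.trans (hmono m)
  have hlim : Filter.Tendsto (fun n => ∫ x, g n x ∂P) Filter.atTop (nhds 0) := by
    have hpt : ∀ x, Filter.Tendsto (fun n => g n x) Filter.atTop (nhds 0) := by
      intro x
      have h1 : Filter.Tendsto (fun n => (1/3:ℝ)^n * d x) Filter.atTop (nhds 0) := by
        have := (tendsto_pow_atTop_nhds_zero_of_lt_one (by norm_num : (0:ℝ) ≤ 1/3)
          (by norm_num : (1/3:ℝ) < 1)).mul_const (d x)
        simpa using this
      have h2 := h1.min (tendsto_const_nhds (x := (1:ℝ)))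
      rw [min_eq_left (by norm_num : (0:ℝ) ≤ 1)] at h2
      exact h2
    have := tendsto_integral_of_dominated_convergence (μ := P) (F := g) (f := fun _ => (0:ℝ)) (fun _ => (1:ℝ))
      (fun n => (hgc n).aestronglyMeasurable) (integrable_const 1)
      (fun n => ae_of_all _ fun x => by simpa using hgb n x)
      (ae_of_all _ hpt)
    simpa using this
  have hle0 : ∫ x, g 0 x ∂P ≤ 0 := ge_of_tendsto' hlim h0n
  have hge0 : 0 ≤ ∫ x, g 0 x ∂P :=
    integral_nonneg fun x => le_min (mul_nonneg (by positivity) (hd0 x)) one_pos.le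
  have hzero : ∫ x, g 0 x ∂P = 0 := le_antisymm hle0 hge0
  have hae : (fun x => g 0 x) =ᵐ[P] 0 := by
    rw [← integral_eq_zero_iff_of_nonneg (fun x => le_min (mul_nonneg (by positivity) (hd0 x)) one_pos.le) (hgint 0)]
    exact hzero
  filter_upwards [hae] with x hx
  simp only [hgdef, pow_zero, one_mul, Pi.zero_apply] at hx
  have hdx : d x = 0 := by
    rcases le_or_gt 1 (d x) with h | h
    · rw [min_eq_right h] at hx; norm_num at hx
    · rwa [min_eq_left h.le] at hx
  exact ((isClosed_Icc).mem_iff_infDist_zero hne).mpr hdx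

noncomputable def u (x : ℝ × ℝ) : ℝ := max 0 (min 1 x.1)
noncomputable def v (x : ℝ × ℝ) : ℝ := max 0 (min 1 x.2)

lemma contu : Continuous u := by unfold u; fun_prop
lemma contv : Continuous v := by unfold v; fun_prop
lemma u_nonneg (x : ℝ × ℝ) : 0 ≤ u x := le_max_left _ _
lemma v_nonneg (x : ℝ × ℝ) : 0 ≤ v x := le_max_left _ _
lemma u_le_one (x : ℝ × ℝ) : u x ≤ 1 := max_le one_pos.le (min_le_left _ _)
lemma v_le_one (x : ℝ × ℝ) : v x ≤ 1 := max_le one_pos.le (min_le_left _ _)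
lemma u_abs (x : ℝ × ℝ) : |u x| ≤ 1 := abs_le.mpr ⟨by linarith [u_nonneg x], u_le_one x⟩
lemma v_abs (x : ℝ × ℝ) : |v x| ≤ 1 := abs_le.mpr ⟨by linarith [v_nonneg x], v_le_one x⟩
lemma u_sq_abs (x : ℝ × ℝ) : |u x ^ 2| ≤ 1 := by
  rw [abs_le]; constructor <;> nlinarith [u_nonneg x, u_le_one x]
lemma v_sq_abs (x : ℝ × ℝ) : |v x ^ 2| ≤ 1 := by
  rw [abs_le]; constructor <;> nlinarith [v_nonneg x, v_le_one x]

lemma u_eqK {x : ℝ × ℝ} (hx : x ∈ K) : u x = x.1 := by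
  rw [mem_K] at hx
  unfold u
  rw [min_eq_right hx.2.1, max_eq_right hx.1]
lemma v_eqK {x : ℝ × ℝ} (hx : x ∈ K) : v x = x.2 := by
  rw [mem_K] at hx
  unfold v
  rw [min_eq_right hx.2.2.2, max_eq_right hx.2.2.1]

lemma uS (i : Fin 4) {x : ℝ × ℝ} (hx : x ∈ K) :
    u (S i x) = u x / 3 + (if i = 1 ∨ i = 3 then (2:ℝ)/3 else 0) := by
  rw [u_eqK (SK i hx), u_eqK hx]; rfl
lemma vS (i : Fin 4) {x : ℝ × ℝ} (hx : x ∈ K) :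
    v (S i x) = v x / 3 + (if i = 2 ∨ i = 3 then (2:ℝ)/3 else 0) := by
  rw [v_eqK (SK i hx), v_eqK hx]; rfl

theorem stmt_8' (P : Measure (ℝ × ℝ)) [IsProbabilityMeasure P] (hP : SelfSimilar P) :
    ∫ x, min ((x.1 - 1 / 6) ^ 2 + (x.2 - 1 / 2) ^ 2)
        ((x.1 - 5 / 6) ^ 2 + (x.2 - 1 / 2) ^ 2) ∂P = 5 / 36 := by
  have hK := ae_mem_K P hP
  have Iu : Integrable u P := integrable_bdd P contu u_abs
  have Iv : Integrable v P := integrable_bdd P contv v_abs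
  have Iu2 : Integrable (fun x => u x ^ 2) P := integrable_bdd P (contu.pow 2) u_sq_abs
  have Iv2 : Integrable (fun x => v x ^ 2) P := integrable_bdd P (contv.pow 2) v_sq_abs
  have hsplit : ∀ a b c d e : ℝ,
      ∫ x, (a * u x ^ 2 + b * u x + c * v x ^ 2 + d * v x + e) ∂P
        = a * ∫ x, u x ^ 2 ∂P + b * ∫ x, u x ∂P + c * ∫ x, v x ^ 2 ∂P
          + d * ∫ x, v x ∂P + e := by
    intro a b c d e
    have I2 : Integrable (fun x => a * u x ^ 2 + b * u x) P :=
      (Iu2.const_mul a).add (Iu.const_mul b)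
    have I3 : Integrable (fun x => a * u x ^ 2 + b * u x + c * v x ^ 2) P :=
      I2.add (Iv2.const_mul c)
    have I4 : Integrable (fun x => a * u x ^ 2 + b * u x + c * v x ^ 2 + d * v x) P :=
      I3.add (Iv.const_mul d)
    rw [integral_add I4 (integrable_const e), integral_add I3 (Iv.const_mul d),
      integral_add I2 (Iv2.const_mul c), integral_add (Iu2.const_mul a) (Iu.const_mul b),
      integral_const_mul, integral_const_mul, integral_const_mul, integral_const_mul,
      integral_const]
    simp
  -- first moments
  have hM1 : ∫ x, u x ∂P = 1/2 := by
    have ht := transfer P hP contu u_abs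
    have hi : ∀ i : Fin 4, ∫ x, u (S i x) ∂P
        = (∫ x, u x ∂P)/3 + (if i = 1 ∨ i = 3 then (2:ℝ)/3 else 0) := by
      intro i
      rw [integral_congr_ae (g := fun x => u x / 3 + (if i = 1 ∨ i = 3 then (2:ℝ)/3 else 0))
        (by filter_upwards [hK] with x hx; exact uS i hx)]
      rw [integral_add (Iu.div_const 3) (integrable_const _), integral_div, integral_const]
      simp [measure_univ]
    rw [hi 0, hi 1, hi 2, hi 3] at ht
    simp at ht
    linarith
  have hN1 : ∫ x, v x ∂P = 1/2 := by
    have ht := transfer P hP contv v_abs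
    have hi : ∀ i : Fin 4, ∫ x, v (S i x) ∂P
        = (∫ x, v x ∂P)/3 + (if i = 2 ∨ i = 3 then (2:ℝ)/3 else 0) := by
      intro i
      rw [integral_congr_ae (g := fun x => v x / 3 + (if i = 2 ∨ i = 3 then (2:ℝ)/3 else 0))
        (by filter_upwards [hK] with x hx; exact vS i hx)]
      rw [integral_add (Iv.div_const 3) (integrable_const _), integral_div, integral_const]
      simp [measure_univ]
    rw [hi 0, hi 1, hi 2, hi 3] at ht
    simp at ht
    linarith
  -- second moments
  have hM2 : ∫ x, u x ^ 2 ∂P = 3/8 := by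
    have ht := transfer P hP (g := fun x => u x ^ 2) (contu.pow 2) u_sq_abs
    have hi : ∀ i : Fin 4, ∫ x, u (S i x) ^ 2 ∂P
        = (1/9) * ∫ x, u x ^ 2 ∂P + ((2/3) * (if i = 1 ∨ i = 3 then (2:ℝ)/3 else 0)) * (1/2)
          + (if i = 1 ∨ i = 3 then (2:ℝ)/3 else 0) ^ 2 := by
      intro i
      set e := (if i = 1 ∨ i = 3 then (2:ℝ)/3 else 0) with he
      rw [integral_congr_ae (g := fun x => (1/9) * u x ^ 2 + ((2/3)*e) * u x + 0 * v x ^ 2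
        + 0 * v x + e^2)
        (by filter_upwards [hK] with x hx
            rw [uS i hx, ← he]; ring)]
      rw [hsplit, hM1]; ring
    rw [hi 0, hi 1, hi 2, hi 3] at ht
    simp at ht
    linarith
  have hN2 : ∫ x, v x ^ 2 ∂P = 3/8 := by
    have ht := transfer P hP (g := fun x => v x ^ 2) (contv.pow 2) v_sq_abs
    have hi : ∀ i : Fin 4, ∫ x, v (S i x) ^ 2 ∂P
        = (1/9) * ∫ x, v x ^ 2 ∂P + ((2/3) * (if i = 2 ∨ i = 3 then (2:ℝ)/3 else 0)) * (1/2)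
          + (if i = 2 ∨ i = 3 then (2:ℝ)/3 else 0) ^ 2 := by
      intro i
      set e := (if i = 2 ∨ i = 3 then (2:ℝ)/3 else 0) with he
      rw [integral_congr_ae (g := fun x => 0 * u x ^ 2 + 0 * u x + (1/9) * v x ^ 2
        + ((2/3)*e) * v x + e^2)
        (by filter_upwards [hK] with x hx
            rw [vS i hx, ← he]; ring)]
      rw [hsplit, hN1]; ring
    rw [hi 0, hi 1, hi 2, hi 3] at ht
    simp at ht
    linarith
  have hquad : ∀ a b c d e : ℝ,
      ∫ x, (a * u x ^ 2 + b * u x + c * v x ^ 2 + d * v x + e) ∂P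
        = a * (3/8) + b * (1/2) + c * (3/8) + d * (1/2) + e := by
    intro a b c d e
    rw [hsplit, hM1, hM2, hN1, hN2]
  -- the clamped objective
  set G : ℝ × ℝ → ℝ := fun x => min ((u x - 1/6)^2 + (v x - 1/2)^2)
    ((u x - 5/6)^2 + (v x - 1/2)^2) with hGdef
  have contG : Continuous G := Continuous.min
    ((((contu.sub continuous_const).pow 2).add ((contv.sub continuous_const).pow 2)))
    ((((contu.sub continuous_const).pow 2).add ((contv.sub continuous_const).pow 2)))
  have hGb : ∀ x, |G x| ≤ 2 := by
    intro x
    rw [abs_le]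
    constructor
    · have : (0:ℝ) ≤ G x := le_min (by positivity) (by positivity)
      linarith
    · calc G x ≤ (u x - 1/6)^2 + (v x - 1/2)^2 := min_le_left _ _
        _ ≤ 2 := by nlinarith [u_nonneg x, u_le_one x, v_nonneg x, v_le_one x]
  have hFG : ∫ x, min ((x.1 - 1 / 6) ^ 2 + (x.2 - 1 / 2) ^ 2)
      ((x.1 - 5 / 6) ^ 2 + (x.2 - 1 / 2) ^ 2) ∂P = ∫ x, G x ∂P := by
    refine integral_congr_ae ?_
    filter_upwards [hK] with x hx
    rw [hGdef]; simp only [u_eqK hx, v_eqK hx]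
  rw [hFG, transfer P hP contG hGb]
  have h0 : ∫ x, G (S 0 x) ∂P = 5/36 := by
    rw [integral_congr_ae (g := fun x => (1/9) * u x ^ 2 + (-1/9) * u x + (1/9) * v x ^ 2
      + (-1/3) * v x + 5/18)
      (by filter_upwards [hK] with x hx
          have hu := uS 0 hx
          have hv := vS 0 hx
          simp at hu hv
          rw [hGdef]
          simp only
          rw [hu, hv, min_eq_left (by nlinarith [u_nonneg x, u_le_one x, v_nonneg x, v_le_one x])]
          ring)]
    rw [hquad]; norm_num
  have h1 : ∫ x, G (S 1 x) ∂P = 5/36 := by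
    rw [integral_congr_ae (g := fun x => (1/9) * u x ^ 2 + (-1/9) * u x + (1/9) * v x ^ 2
      + (-1/3) * v x + 5/18)
      (by filter_upwards [hK] with x hx
          have hu := uS 1 hx
          have hv := vS 1 hx
          simp at hu hv
          rw [hGdef]
          simp only
          rw [hu, hv, min_eq_right (by nlinarith [u_nonneg x, u_le_one x, v_nonneg x, v_le_one x])]
          ring)]
    rw [hquad]; norm_num
  have h2 : ∫ x, G (S 2 x) ∂P = 5/36 := by
    rw [integral_congr_ae (g := fun x => (1/9) * u x ^ 2 + (-1/9) * u x + (1/9) * v x ^ 2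
      + (1/9) * v x + 1/18)
      (by filter_upwards [hK] with x hx
          have hu := uS 2 hx
          have hv := vS 2 hx
          simp at hu hv
          rw [hGdef]
          simp only
          rw [hu, hv, min_eq_left (by nlinarith [u_nonneg x, u_le_one x, v_nonneg x, v_le_one x])]
          ring)]
    rw [hquad]; norm_num
  have h3 : ∫ x, G (S 3 x) ∂P = 5/36 := by
    rw [integral_congr_ae (g := fun x => (1/9) * u x ^ 2 + (-1/9) * u x + (1/9) * v x ^ 2
      + (1/9) * v x + 1/18)
      (by filter_upwards [hK] with x hx
          have hu := uS 3 hx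
          have hv := vS 3 hx
          simp at hu hv
          rw [hGdef]
          simp only
          rw [hu, hv, min_eq_right (by nlinarith [u_nonneg x, u_le_one x, v_nonneg x, v_le_one x])]
          ring)]
    rw [hquad]; norm_num
  rw [h0, h1, h2, h3]
  norm_num

end Q8

/-- The distortion error of `{(1/6, 1/2), (5/6, 1/2)}` equals `5/36`. -/
theorem stmt_8 (P : Measure (ℝ × ℝ)) [IsProbabilityMeasure P] (hP : SelfSimilar P) :
    ∫ x, min ((x.1 - 1 / 6) ^ 2 + (x.2 - 1 / 2) ^ 2)
        ((x.1 - 5 / 6) ^ 2 + (x.2 - 1 / 2) ^ 2) ∂P = 5 / 36 := by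
  exact Q8.stmt_8' P hP
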